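/- Let ε ∈ (0, 1/2), let (Ω, F, P, (τ_x)_{x∈ℝ}) be an ergodic measure-preserving flow, and let A ∈ F with P(A) > 1 − ε. Then P-almost surely, for every δ > 2ε/(1−2ε) and for all sufficiently large t > 0, there exists s ∈ (t, (1+δ)t) such that τ_s ω ∈ A. -/

import Mathlib

open MeasureTheory Filter





private lemma kw_bound {Ω : Type*} (T : Ω → Ω) (F : Ω → ℝ) (B : Set Ω) (c : ℝ) (M : ℕ)
    (hF0 : ∀ ω, 0 ≤ F ω) (hF1 : ∀ ω, F ω ≤ 1) (hc0 : 0 ≤ c) (hc1 : c ≤ 1)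
    (hB : ∀ ω, ω ∉ B → ∃ n, 1 ≤ n ∧ n ≤ M ∧
      ∑ k ∈ Finset.range n, F (T^[k] ω) ≤ c * n) :
    ∀ N ω, ∑ k ∈ Finset.range N, F (T^[k] ω) ≤
      c * N + (∑ k ∈ Finset.range N, B.indicator (fun _ => (1:ℝ)) (T^[k] ω)) + M := by
  intro N
  induction N using Nat.strong_induction_on with
  | _ N ih =>
    intro ω
    have hind0 : ∀ x, 0 ≤ B.indicator (fun _ => (1:ℝ)) x := fun x =>
      Set.indicator_nonneg (fun _ _ => zero_le_one) x
    have hindsum0 : ∀ (m : ℕ) (x : Ω),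
        0 ≤ ∑ k ∈ Finset.range m, B.indicator (fun _ => (1:ℝ)) (T^[k] x) := fun m x =>
      Finset.sum_nonneg fun k _ => hind0 _
    by_cases hωB : ω ∈ B
    · match N with
      | 0 => simpa using Nat.cast_nonneg M
      | (N' + 1) =>
        have hF : ∑ k ∈ Finset.range (N' + 1), F (T^[k] ω)
            = (∑ k ∈ Finset.range N', F (T^[k] (T ω))) + F ω := by
          rw [Finset.sum_range_succ']
          simp [Function.iterate_succ_apply]
        have hI : ∑ k ∈ Finset.range (N' + 1), B.indicator (fun _ => (1:ℝ)) (T^[k] ω)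
            = (∑ k ∈ Finset.range N', B.indicator (fun _ => (1:ℝ)) (T^[k] (T ω)))
              + B.indicator (fun _ => (1:ℝ)) ω := by
          rw [Finset.sum_range_succ']
          simp [Function.iterate_succ_apply]
        have h1 := ih N' (Nat.lt_succ_self N') (T ω)
        have hFω : F ω ≤ B.indicator (fun _ => (1:ℝ)) ω := by
          rw [Set.indicator_of_mem hωB]; exact hF1 ω
        have hcc : c * (N' : ℝ) ≤ c * ((N' : ℝ) + 1) := by nlinarith
        rw [hF, hI]
        push_cast
        linarith
    · obtain ⟨n, hn1, hnM, hsum⟩ := hB ω hωB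
      by_cases hNn : N ≤ n
      · have h1 : ∑ k ∈ Finset.range N, F (T^[k] ω) ≤ ∑ k ∈ Finset.range n, F (T^[k] ω) :=
          Finset.sum_le_sum_of_subset_of_nonneg
            (Finset.range_subset_range.mpr hNn) (fun k _ _ => hF0 _)
        have h2 : c * (n : ℝ) ≤ (n : ℝ) := by
          have : (0:ℝ) ≤ (n:ℝ) := Nat.cast_nonneg n
          nlinarith
        have h3 : (n : ℝ) ≤ (M : ℝ) := Nat.cast_le.mpr hnM
        have h4 : (0:ℝ) ≤ c * (N : ℝ) := by positivity
        linarith [hindsum0 N ω]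
      · push_neg at hNn
        have hNeq : N = n + (N - n) := (Nat.add_sub_cancel' hNn.le).symm
        have hFsplit : ∑ k ∈ Finset.range N, F (T^[k] ω)
            = (∑ k ∈ Finset.range n, F (T^[k] ω))
              + ∑ k ∈ Finset.range (N - n), F (T^[k] (T^[n] ω)) := by
          rw [hNeq, Finset.sum_range_add, Nat.add_sub_cancel_left]
          congr 1
          refine Finset.sum_congr rfl fun k _ => ?_
          rw [add_comm n k, Function.iterate_add_apply]
        have hIsplit : ∑ k ∈ Finset.range N, B.indicator (fun _ => (1:ℝ)) (T^[k] ω)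
            = (∑ k ∈ Finset.range n, B.indicator (fun _ => (1:ℝ)) (T^[k] ω))
              + ∑ k ∈ Finset.range (N - n), B.indicator (fun _ => (1:ℝ)) (T^[k] (T^[n] ω)) := by
          rw [hNeq, Finset.sum_range_add, Nat.add_sub_cancel_left]
          congr 1
          refine Finset.sum_congr rfl fun k _ => ?_
          rw [add_comm n k, Function.iterate_add_apply]
        have h1 := ih (N - n) (Nat.sub_lt (Nat.lt_of_lt_of_le (Nat.lt_of_lt_of_le Nat.zero_lt_one hn1) hNn.le) (Nat.lt_of_lt_of_le Nat.zero_lt_one hn1)) (T^[n] ω)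
        have hcast : ((N - n : ℕ) : ℝ) = (N : ℝ) - (n : ℝ) := by
          push_cast [Nat.cast_sub hNn.le]; ring
        rw [hFsplit, hIsplit]
        rw [hcast] at h1
        nlinarith [hindsum0 n ω, h1, hsum]


private lemma liminf_le_liminf_of_sub (u v : ℕ → ℝ) (r : ℝ)
    (hu0 : ∀ n, 0 ≤ u n) (hu1 : ∀ n, u n ≤ 1) (hv0 : ∀ n, 0 ≤ v n) (hv1 : ∀ n, v n ≤ 1)
    (h : ∀ n : ℕ, 1 ≤ n → u n ≤ v n + r / n) :
    liminf u atTop ≤ liminf v atTop := by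
  have hbu : IsBoundedUnder (· ≥ ·) atTop u := isBoundedUnder_of ⟨0, fun n => hu0 n⟩
  have hbv : IsBoundedUnder (· ≥ ·) atTop v := isBoundedUnder_of ⟨0, fun n => hv0 n⟩
  have hcv : IsCoboundedUnder (· ≥ ·) atTop v :=
    Filter.isCoboundedUnder_ge_of_le atTop (x := 1) hv1
  refine le_of_forall_pos_le_add fun η hη => ?_
  have hev : ∀ᶠ n : ℕ in atTop, u n ≤ v n + η := by
    filter_upwards [Filter.eventually_ge_atTop (max 1 ⌈|r| / η⌉₊)] with n hn
    have hn1 : 1 ≤ n := le_trans (le_max_left _ _) hn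
    have hn2 : |r| / η ≤ (n : ℝ) := by
      calc |r| / η ≤ (⌈|r| / η⌉₊ : ℝ) := Nat.le_ceil _
      _ ≤ n := Nat.cast_le.mpr (le_trans (le_max_right _ _) hn)
    have hnpos : (0:ℝ) < n := by positivity
    have : r / n ≤ η := by
      rw [div_le_iff₀ hnpos]
      calc r ≤ |r| := le_abs_self r
      _ ≤ η * n := by rw [div_le_iff₀ hη] at hn2; linarith
    linarith [h n hn1]
  have hcvη : IsCoboundedUnder (· ≥ ·) atTop (fun n => v n + η) :=
    Filter.isCoboundedUnder_ge_of_le atTop (x := 1 + η)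
      (fun n => add_le_add_left (hv1 n) η)
  calc liminf u atTop ≤ liminf (fun n => v n + η) atTop := liminf_le_liminf hev hbu hcvη
    _ = liminf v atTop + η := liminf_add_const atTop v η hcv hbv


private noncomputable def hitm {Ω : Type*} (τ : ℝ → Ω → Ω) (A : Set Ω)
    (ω : Ω) (a b : ℝ) : ENNReal :=
  MeasureTheory.volume ({s : ℝ | τ s ω ∈ A} ∩ Set.Ioc a b)

section hitm

variable {Ω : Type*} [MeasurableSpace Ω] {τ : ℝ → Ω → Ω} {A : Set Ω}

private lemma hitset_meas (hmeas : Measurable fun p : ℝ × Ω => τ p.1 p.2)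
    (hA : MeasurableSet A) (ω : Ω) : MeasurableSet {s : ℝ | τ s ω ∈ A} :=
  (hmeas.comp (measurable_id.prodMk measurable_const)) hA

private lemma hitm_measurable (hmeas : Measurable fun p : ℝ × Ω => τ p.1 p.2)
    (hA : MeasurableSet A) (a b : ℝ) :
    Measurable fun ω => hitm τ A ω a b := by
  have hE : MeasurableSet {p : Ω × ℝ | τ p.2 p.1 ∈ A} :=
    (hmeas.comp measurable_swap) hA
  have h := measurable_measure_prodMk_left
    (ν := MeasureTheory.volume.restrict (Set.Ioc a b)) hE
  have heq : (fun ω => hitm τ A ω a b)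
      = fun ω => (MeasureTheory.volume.restrict (Set.Ioc a b))
          (Prod.mk ω ⁻¹' {p : Ω × ℝ | τ p.2 p.1 ∈ A}) := by
    funext ω
    have : Prod.mk ω ⁻¹' {p : Ω × ℝ | τ p.2 p.1 ∈ A} = {s : ℝ | τ s ω ∈ A} := rfl
    rw [this, Measure.restrict_apply (hitset_meas hmeas hA ω)]
    rfl
  rw [heq]; exact h

private lemma hitm_le (ω : Ω) (a b : ℝ) : hitm τ A ω a b ≤ ENNReal.ofReal (b - a) := by
  calc hitm τ A ω a b ≤ MeasureTheory.volume (Set.Ioc a b) :=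
        measure_mono Set.inter_subset_right
  _ = ENNReal.ofReal (b - a) := Real.volume_Ioc

private lemma hitm_ne_top (ω : Ω) (a b : ℝ) : hitm τ A ω a b ≠ ⊤ :=
  ne_top_of_le_ne_top ENNReal.ofReal_ne_top (hitm_le ω a b)

private lemma hitm_translate (hflow : ∀ s t : ℝ, τ (s + t) = τ s ∘ τ t)
    (r : ℝ) (ω : Ω) (a b : ℝ) :
    hitm τ A (τ r ω) a b = hitm τ A ω (a + r) (b + r) := by
  have hset : {s : ℝ | τ s (τ r ω) ∈ A} = (fun s => s + r) ⁻¹' {s : ℝ | τ s ω ∈ A} := by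
    ext s
    simp only [Set.mem_setOf_eq, Set.mem_preimage]
    rw [show τ (s + r) ω = τ s (τ r ω) from congrFun (hflow s r) ω ▸ rfl]
  have hIoc : Set.Ioc a b = (fun s => s + r) ⁻¹' Set.Ioc (a + r) (b + r) := by
    ext s
    simp only [Set.mem_Ioc, Set.mem_preimage]
    constructor <;> intro h <;> constructor <;> linarith [h.1, h.2]
  unfold hitm
  rw [hset, hIoc, ← Set.preimage_inter,
    measure_preimage_add_right MeasureTheory.volume r _]

private lemma hitm_add (hmeas : Measurable fun p : ℝ × Ω => τ p.1 p.2)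
    (hA : MeasurableSet A) (ω : Ω) {a b c : ℝ} (hab : a ≤ b) (hbc : b ≤ c) :
    hitm τ A ω a c = hitm τ A ω a b + hitm τ A ω b c := by
  unfold hitm
  rw [← measure_union _ ((hitset_meas hmeas hA ω).inter measurableSet_Ioc)]
  · rw [← Set.inter_union_distrib_left, Set.Ioc_union_Ioc_eq_Ioc hab hbc]
  · exact (Set.Ioc_disjoint_Ioc_of_le le_rfl).mono Set.inter_subset_right Set.inter_subset_right

end hitm



set_option maxHeartbeats 2000000 in
/-- Ergodic hitting lemma along a measure-preserving flow. -/
theorem stmt_0 {Ω : Type*} [MeasurableSpace Ω] (P : Measure Ω) [IsProbabilityMeasure P]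
    (τ : ℝ → Ω → Ω)
    (hmeas : Measurable fun p : ℝ × Ω => τ p.1 p.2)
    (hmp : ∀ s : ℝ, MeasurePreserving (τ s) P P)
    (hflow : ∀ s t : ℝ, τ (s + t) = τ s ∘ τ t)
    (herg : ∀ A : Set Ω, MeasurableSet A → (∀ s : ℝ, τ s ⁻¹' A = A) → P A = 0 ∨ P A = 1)
    (ε : ℝ) (hε : ε ∈ Set.Ioo (0 : ℝ) (1/2))
    (A : Set Ω) (hA : MeasurableSet A) (hPA : P A > ENNReal.ofReal (1 - ε)) :
    ∀ᵐ ω ∂P, ∀ δ > 2 * ε / (1 - 2 * ε), ∃ t₀ : ℝ, ∀ t > t₀,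
      ∃ s ∈ Set.Ioo t ((1 + δ) * t), τ s ω ∈ A := by
  obtain ⟨hε0, hεh⟩ := hε
  set c : ℝ := 1 - ε with hcdef
  have hc0 : 0 < c := by rw [hcdef]; linarith
  have hc1 : c < 1 := by rw [hcdef]; linarith
  -- the discrete map
  set T : Ω → Ω := τ 1 with hTdef
  have hT : Measurable T := hmeas.comp (measurable_const.prodMk measurable_id)
  have hTmp : MeasurePreserving T P P := hmp 1
  have hTk : ∀ k : ℕ, 1 ≤ k → ∀ ω, T^[k] ω = τ (k : ℝ) ω := by
    intro k hk
    induction k with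
    | zero => omega
    | succ k ih =>
      intro ω
      rcases Nat.eq_or_lt_of_le hk with h1 | h2
      · simp only [← h1]
        simp [hTdef]
      · have hk1 : 1 ≤ k := by omega
        rw [Function.iterate_succ_apply', ih hk1 ω]
        have := congrFun (hflow 1 (k : ℝ)) ω
        simp only [Function.comp_apply] at this
        rw [hTdef, ← this, add_comm]
        norm_cast
  -- the one-step hit fraction
  set F : Ω → ℝ := fun ω => (hitm τ A ω 0 1).toReal with hFdef
  have hF0 : ∀ ω, 0 ≤ F ω := fun ω => ENNReal.toReal_nonneg
  have hF1 : ∀ ω, F ω ≤ 1 := by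
    intro ω
    apply ENNReal.toReal_le_of_le_ofReal zero_le_one
    simpa using hitm_le (τ := τ) (A := A) ω 0 1
  have hFmeas : Measurable F := (hitm_measurable hmeas hA 0 1).ennreal_toReal
  -- iterate values of F
  have hFiter : ∀ (k : ℕ) (ω : Ω),
      F (T^[k] ω) = (hitm τ A ω (k : ℝ) ((k : ℝ) + 1)).toReal := by
    intro k ω
    rcases Nat.eq_zero_or_pos k with h0 | hpos
    · subst h0; simp [hFdef]
    · rw [hFdef]
      simp only
      rw [hTk k hpos ω, hitm_translate hflow (k : ℝ) ω 0 1, zero_add, add_comm 1 (k:ℝ)]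
  -- sums of F along the orbit
  have hSum : ∀ (ω : Ω) (N : ℕ),
      ∑ k ∈ Finset.range N, F (T^[k] ω) = (hitm τ A ω 0 (N : ℝ)).toReal := by
    intro ω N
    induction N with
    | zero => simp [hitm]
    | succ N ih =>
      rw [Finset.sum_range_succ, ih, hFiter N ω]
      rw [← ENNReal.toReal_add (hitm_ne_top ω 0 N) (hitm_ne_top ω N (N+1))]
      rw [← hitm_add hmeas hA ω (Nat.cast_nonneg N) (by linarith [Nat.cast_nonneg (α := ℝ) N])]
      push_cast
      ring_nf
  -- the averages and the liminf event
  set avg : ℕ → Ω → ℝ := fun n ω => (hitm τ A ω 0 (n : ℝ)).toReal / n with havgdef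
  have havg0 : ∀ n ω, 0 ≤ avg n ω := fun n ω => by
    apply div_nonneg ENNReal.toReal_nonneg (Nat.cast_nonneg n)
  have havg1 : ∀ n ω, avg n ω ≤ 1 := by
    intro n ω
    rcases Nat.eq_zero_or_pos n with h0 | hpos
    · subst h0; simp [havgdef]
    · have hnpos : (0:ℝ) < n := by exact_mod_cast hpos
      rw [havgdef]
      rw [div_le_one hnpos]
      apply ENNReal.toReal_le_of_le_ofReal (le_of_lt hnpos)
      simpa using hitm_le (τ := τ) (A := A) ω 0 n
  set D : Set Ω := {ω | liminf (fun n => avg n ω) atTop < c} with hDdef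
  have havgmeas : ∀ n : ℕ, Measurable (avg n) := fun n =>
    ((hitm_measurable hmeas hA 0 (n : ℝ)).ennreal_toReal).div_const _
  have hDmeas : MeasurableSet D := by
    have hlm : Measurable fun ω => liminf (fun n => avg n ω) atTop :=
      Measurable.liminf havgmeas
    exact measurableSet_lt hlm measurable_const
  have hEst : ∀ (r : ℝ) (ω : Ω) (n : ℕ),
      hitm τ A (τ r ω) 0 (n : ℝ) ≤ hitm τ A ω 0 (n : ℝ) + ENNReal.ofReal (4 * |r|) ∧
      hitm τ A ω 0 (n : ℝ) ≤ hitm τ A (τ r ω) 0 (n : ℝ) + ENNReal.ofReal (4 * |r|) := by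
    intro r ω n
    have htr : hitm τ A (τ r ω) 0 (n : ℝ) = hitm τ A ω r ((n : ℝ) + r) := by
      rw [hitm_translate hflow r ω 0 (n : ℝ), zero_add]
    have hvol : MeasureTheory.volume (Set.Ioc (-|r|) |r| ∪ Set.Ioc ((n:ℝ) - |r|) ((n:ℝ) + |r|))
        ≤ ENNReal.ofReal (4 * |r|) := by
      refine le_trans (measure_union_le _ _) ?_
      rw [Real.volume_Ioc, Real.volume_Ioc, ← ENNReal.ofReal_add (by linarith [abs_nonneg r])
        (by linarith [abs_nonneg r])]
      apply ENNReal.ofReal_le_ofReal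
      have := abs_nonneg r
      linarith
    set S : Set ℝ := {s : ℝ | τ s ω ∈ A} with hSdef
    set Ex : Set ℝ := Set.Ioc (-|r|) |r| ∪ Set.Ioc ((n:ℝ) - |r|) ((n:ℝ) + |r|) with hExdef
    have hra : r ≤ |r| := le_abs_self r
    have hrb : -|r| ≤ r := neg_abs_le r
    constructor
    · rw [htr]
      have hsub : S ∩ Set.Ioc r ((n:ℝ) + r) ⊆ (S ∩ Set.Ioc 0 (n : ℝ)) ∪ Ex := by
        rintro s ⟨hsS, hs1, hs2⟩
        rcases le_or_gt s 0 with h0 | h0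
        · exact Or.inr (Or.inl ⟨by linarith, by linarith⟩)
        · rcases le_or_gt s (n : ℝ) with h1 | h1
          · exact Or.inl ⟨hsS, h0, h1⟩
          · exact Or.inr (Or.inr ⟨by linarith, by linarith⟩)
      calc hitm τ A ω r ((n:ℝ) + r) ≤ MeasureTheory.volume ((S ∩ Set.Ioc 0 (n : ℝ)) ∪ Ex) :=
            measure_mono hsub
        _ ≤ hitm τ A ω 0 (n : ℝ) + ENNReal.ofReal (4 * |r|) :=
            le_trans (measure_union_le _ _) (add_le_add_right hvol _)
    · rw [htr]
      have hsub : S ∩ Set.Ioc 0 (n : ℝ) ⊆ (S ∩ Set.Ioc r ((n:ℝ) + r)) ∪ Ex := by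
        rintro s ⟨hsS, hs1, hs2⟩
        rcases le_or_gt s r with h0 | h0
        · exact Or.inr (Or.inl ⟨by linarith, by linarith⟩)
        · rcases le_or_gt s ((n : ℝ) + r) with h1 | h1
          · exact Or.inl ⟨hsS, h0, h1⟩
          · exact Or.inr (Or.inr ⟨by linarith, by linarith⟩)
      calc hitm τ A ω 0 (n : ℝ) ≤ MeasureTheory.volume ((S ∩ Set.Ioc r ((n:ℝ) + r)) ∪ Ex) :=
            measure_mono hsub
        _ ≤ hitm τ A ω r ((n:ℝ) + r) + ENNReal.ofReal (4 * |r|) :=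
            le_trans (measure_union_le _ _) (add_le_add_right hvol _)
  have havgEst : ∀ (r : ℝ) (ω : Ω) (n : ℕ), 1 ≤ n →
      avg n (τ r ω) ≤ avg n ω + (4 * |r|) / n ∧
      avg n ω ≤ avg n (τ r ω) + (4 * |r|) / n := by
    intro r ω n hn
    obtain ⟨h1, h2⟩ := hEst r ω n
    have hnpos : (0:ℝ) < n := by exact_mod_cast hn
    have habs : (0:ℝ) ≤ 4 * |r| := by positivity
    have key : ∀ x y : ENNReal, x ≠ ⊤ → y ≠ ⊤ → x ≤ y + ENNReal.ofReal (4 * |r|) →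
        x.toReal / n ≤ y.toReal / n + (4 * |r|) / n := by
      intro x y hx hy hxy
      have : x.toReal ≤ y.toReal + 4 * |r| := by
        have h := ENNReal.toReal_mono (by
          exact ENNReal.add_ne_top.mpr ⟨hy, ENNReal.ofReal_ne_top⟩) hxy
        rwa [ENNReal.toReal_add hy ENNReal.ofReal_ne_top, ENNReal.toReal_ofReal habs] at h
      rw [← add_div]
      exact (div_le_div_iff_of_pos_right hnpos).mpr this
    constructor
    · exact key _ _ (hitm_ne_top _ _ _) (hitm_ne_top _ _ _) h1
    · exact key _ _ (hitm_ne_top _ _ _) (hitm_ne_top _ _ _) h2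
  have hDinv : ∀ r : ℝ, τ r ⁻¹' D = D := by
    intro r
    have hlem : ∀ ω, liminf (fun n => avg n (τ r ω)) atTop = liminf (fun n => avg n ω) atTop := by
      intro ω
      apply le_antisymm
      · exact liminf_le_liminf_of_sub _ _ (4 * |r|) (fun n => havg0 n _) (fun n => havg1 n _)
          (fun n => havg0 n _) (fun n => havg1 n _) (fun n hn => (havgEst r ω n hn).1)
      · exact liminf_le_liminf_of_sub _ _ (4 * |r|) (fun n => havg0 n _) (fun n => havg1 n _)
          (fun n => havg0 n _) (fun n => havg1 n _) (fun n hn => (havgEst r ω n hn).2)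
    ext ω
    simp only [Set.mem_preimage, hDdef, Set.mem_setOf_eq]
    rw [hlem ω]
  -- the Fubini computation
  have hintF : ∫ ω, F ω ∂P = (P A).toReal := by
    have hE : MeasurableSet {p : Ω × ℝ | τ p.2 p.1 ∈ A} := (hmeas.comp measurable_swap) hA
    set ν : Measure ℝ := MeasureTheory.volume.restrict (Set.Ioc (0:ℝ) 1) with hν
    have hσmeas : Measurable fun ω => hitm τ A ω 0 1 := hitm_measurable hmeas hA 0 1
    have h1 : ∫ ω, F ω ∂P = (∫⁻ ω, hitm τ A ω 0 1 ∂P).toReal :=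
      integral_toReal hσmeas.aemeasurable (ae_of_all _ fun ω =>
        lt_of_le_of_lt (hitm_le ω 0 1) ENNReal.ofReal_lt_top)
    have h2 : ∫⁻ ω, hitm τ A ω 0 1 ∂P = (P.prod ν) {p : Ω × ℝ | τ p.2 p.1 ∈ A} := by
      rw [Measure.prod_apply hE]
      refine lintegral_congr fun ω => ?_
      have hpre : Prod.mk ω ⁻¹' {p : Ω × ℝ | τ p.2 p.1 ∈ A} = {s : ℝ | τ s ω ∈ A} := rfl
      rw [hpre, hν, Measure.restrict_apply (hitset_meas hmeas hA ω)]
      rfl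
    have h3 : (P.prod ν) {p : Ω × ℝ | τ p.2 p.1 ∈ A} = P A := by
      rw [Measure.prod_apply_symm hE]
      have h4 : ∀ s : ℝ, P ((fun ω => (ω, s)) ⁻¹' {p : Ω × ℝ | τ p.2 p.1 ∈ A}) = P A := by
        intro s
        have : ((fun ω : Ω => (ω, s)) ⁻¹' {p : Ω × ℝ | τ p.2 p.1 ∈ A}) = τ s ⁻¹' A := rfl
        rw [this]
        exact (hmp s).measure_preimage hA.nullMeasurableSet
      rw [lintegral_congr h4, lintegral_const]
      rw [hν, Measure.restrict_apply_univ, Real.volume_Ioc]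
      simp
    rw [h1, h2, h3]
  have hPAc : c < (P A).toReal := by
    rw [hcdef]
    exact (ENNReal.ofReal_lt_iff_lt_toReal (by linarith) (measure_ne_top P A)).mp hPA
  -- ruling out P D = 1 via Katznelson–Weiss
  have hD0 : P D = 0 := by
    rcases herg D hDmeas hDinv with h | h
    · exact h
    · exfalso
      set γ : ℝ := (P A).toReal - c with hγdef
      have hγ0 : 0 < γ := by rw [hγdef]; linarith
      set Bad : ℕ → Set Ω := fun M => {ω | ¬ ∃ n, 1 ≤ n ∧ n ≤ M ∧
        ∑ k ∈ Finset.range n, F (T^[k] ω) ≤ c * n} with hBaddef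
      have hsum_meas : ∀ n : ℕ, Measurable fun ω => ∑ k ∈ Finset.range n, F (T^[k] ω) :=
        fun n => Finset.measurable_sum _ (fun k _ => hFmeas.comp (hT.iterate k))
      have hBadmeas : ∀ M, MeasurableSet (Bad M) := by
        intro M
        have hrw : Bad M = (⋃ (n : ℕ), ⋃ (_ : 1 ≤ n ∧ n ≤ M),
            {ω | ∑ k ∈ Finset.range n, F (T^[k] ω) ≤ c * n})ᶜ := by
          ext ω
          simp only [hBaddef, Set.mem_setOf_eq, Set.mem_compl_iff, Set.mem_iUnion]
          push_neg
          constructor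
          · intro h n hn; exact h n hn.1 hn.2
          · intro h n h1 h2; exact h n ⟨h1, h2⟩
        rw [hrw]
        exact (MeasurableSet.iUnion fun n => MeasurableSet.iUnion fun _ =>
          measurableSet_le (hsum_meas n) measurable_const).compl
      have hBadanti : Antitone Bad := by
        intro M M' hMM' ω hω
        simp only [hBaddef, Set.mem_setOf_eq] at hω ⊢
        intro ⟨n, h1, h2, h3⟩
        exact hω ⟨n, h1, le_trans h2 hMM', h3⟩
      have hInter : P (⋂ M, Bad M) = 0 := by
        have hsub : (⋂ M, Bad M) ⊆ Dᶜ := by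
          intro ω hω hωD
          simp only [hDdef, Set.mem_setOf_eq] at hωD
          have hfreq : ∃ᶠ n in atTop, avg n ω < c :=
            frequently_lt_of_liminf_lt
              (Filter.isCoboundedUnder_ge_of_le atTop (x := 1) (fun n => havg1 n ω)) hωD
          obtain ⟨n, hn1, hnavg⟩ := (hfreq.and_eventually (eventually_ge_atTop 1)).exists
          have hnpos : (0:ℝ) < n := by exact_mod_cast hnavg
          rw [havgdef] at hn1
          simp only at hn1
          have hsumlt : ∑ k ∈ Finset.range n, F (T^[k] ω) ≤ c * n := by
            rw [hSum ω n]
            rw [div_lt_iff₀ hnpos] at hn1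
            linarith
          have := Set.mem_iInter.mp hω n
          simp only [hBaddef, Set.mem_setOf_eq] at this
          exact this ⟨n, hnavg, le_refl n, hsumlt⟩
        have hDc : P Dᶜ = 0 := by
          rw [measure_compl hDmeas (measure_ne_top P D), h, measure_univ, tsub_self]
        exact le_antisymm (le_trans (measure_mono hsub) hDc.le) zero_le
      have htend : Tendsto (fun M => P (Bad M)) atTop (nhds 0) := by
        have := tendsto_measure_iInter_atTop (μ := P)
          (fun M => (hBadmeas M).nullMeasurableSet) hBadanti ⟨0, measure_ne_top P _⟩
        rwa [hInter] at this
      have hev : ∀ᶠ M in atTop, P (Bad M) < ENNReal.ofReal (γ / 2) :=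
        htend.eventually_lt_const (ENNReal.ofReal_pos.mpr (by linarith))
      obtain ⟨M, hM⟩ := hev.exists
      have hBM : (P (Bad M)).toReal < γ / 2 :=
        (ENNReal.lt_ofReal_iff_toReal_lt (measure_ne_top P _)).mp hM
      obtain ⟨N, hN1, hN2⟩ : ∃ N : ℕ, 1 ≤ N ∧ (M : ℝ) / N < γ / 2 := by
        have := (tendsto_const_div_atTop_nhds_zero_nat (M : ℝ)).eventually_lt_const
          (show (0:ℝ) < γ / 2 by linarith)
        obtain ⟨N, hN⟩ := (this.and (eventually_ge_atTop 1)).exists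
        exact ⟨N, hN.2, hN.1⟩
      have hkw := kw_bound T F (Bad M) c M hF0 hF1 hc0.le hc1.le
        (fun ω hω => by
          simp only [hBaddef, Set.mem_setOf_eq, not_not] at hω
          exact hω) N
      -- integrability
      have hFint : ∀ k : ℕ, Integrable (fun ω => F (T^[k] ω)) P := fun k =>
        Integrable.mono' (integrable_const 1)
          ((hFmeas.comp (hT.iterate k)).aestronglyMeasurable)
          (ae_of_all _ fun ω => by
            rw [Real.norm_eq_abs, abs_of_nonneg (hF0 _)]; exact hF1 _)
      have hIint : ∀ k : ℕ, Integrable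
          (fun ω => (Bad M).indicator (fun _ => (1:ℝ)) (T^[k] ω)) P := fun k =>
        Integrable.mono' (integrable_const 1)
          (((measurable_const.indicator (hBadmeas M)).comp (hT.iterate k)).aestronglyMeasurable)
          (ae_of_all _ fun ω => by
            rw [Real.norm_eq_abs, abs_of_nonneg (Set.indicator_nonneg (fun _ _ => zero_le_one) _)]
            exact Set.indicator_apply_le' (fun _ => le_refl 1) (fun _ => zero_le_one))
      have hcomp : ∀ (k : ℕ) (g : Ω → ℝ), Measurable g → ∫ ω, g (T^[k] ω) ∂P = ∫ ω, g ω ∂P := by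
        intro k g hg
        calc ∫ ω, g (T^[k] ω) ∂P = ∫ y, g y ∂(Measure.map T^[k] P) :=
              (integral_map (hT.iterate k).aemeasurable hg.aestronglyMeasurable).symm
          _ = ∫ y, g y ∂P := by rw [(hTmp.iterate k).map_eq]
      have hLHS : ∫ ω, ∑ k ∈ Finset.range N, F (T^[k] ω) ∂P = N * (P A).toReal := by
        rw [integral_finset_sum _ (fun k _ => hFint k)]
        have : ∀ k ∈ Finset.range N, ∫ ω, F (T^[k] ω) ∂P = (P A).toReal := by
          intro k _; rw [hcomp k F hFmeas, hintF]
        rw [Finset.sum_congr rfl this, Finset.sum_const, Finset.card_range, nsmul_eq_mul]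
      have hIk : ∀ k : ℕ, ∫ ω, (Bad M).indicator (fun _ => (1:ℝ)) (T^[k] ω) ∂P
          = (P (Bad M)).toReal := by
        intro k
        rw [hcomp k _ (measurable_const.indicator (hBadmeas M))]
        rw [integral_indicator_const (1:ℝ) (hBadmeas M)]
        simp [measureReal_def]
      have hRHS : ∫ ω, (c * N + (∑ k ∈ Finset.range N,
          (Bad M).indicator (fun _ => (1:ℝ)) (T^[k] ω)) + M) ∂P
          = c * N + N * (P (Bad M)).toReal + M := by
        rw [integral_add (by
            exact (integrable_const _).add (integrable_finset_sum _ (fun k _ => hIint k)))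
          (integrable_const _)]
        rw [integral_add (integrable_const _) (integrable_finset_sum _ (fun k _ => hIint k))]
        rw [integral_finset_sum _ (fun k _ => hIint k)]
        rw [Finset.sum_congr rfl (fun k _ => hIk k), Finset.sum_const, Finset.card_range,
          nsmul_eq_mul, integral_const, integral_const]
        simp [measure_univ]
      have hmain : (N:ℝ) * (P A).toReal ≤ c * N + N * (P (Bad M)).toReal + M := by
        rw [← hLHS, ← hRHS]
        exact integral_mono (integrable_finset_sum _ (fun k _ => hFint k))
          ((((integrable_const _).add (integrable_finset_sum _ (fun k _ => hIint k))).add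
            (integrable_const _))) (fun ω => hkw ω)
      have hNpos : (0:ℝ) < N := by exact_mod_cast hN1
      have hMN : (M:ℝ) < γ / 2 * N := by
        rw [div_lt_iff₀ hNpos] at hN2
        linarith
      nlinarith [hBM, hmain, hNpos, hγ0]
  -- conclusion
  have hae : ∀ᵐ ω ∂P, ω ∉ D := by
    rw [ae_iff]
    simpa using hD0
  filter_upwards [hae] with ω hω
  intro δ hδ
  have h12 : 0 < 1 - 2 * ε := by linarith
  have hδ0 : 0 < δ := lt_of_le_of_lt (by positivity) hδ
  have h1δ : (0:ℝ) < 1 + δ := by linarith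
  have hlim : c ≤ liminf (fun n => avg n ω) atTop := by
    simp only [hDdef, Set.mem_setOf_eq] at hω
    exact not_lt.mp hω
  have hkey : 1 / (1 + δ) < c := by
    rw [div_lt_iff₀ h1δ]
    rw [gt_iff_lt, div_lt_iff₀ h12] at hδ
    rw [hcdef]
    nlinarith
  set c' : ℝ := (1 / (1 + δ) + c) / 2 with hc'def
  have hc'lb : 1 / (1 + δ) < c' := by rw [hc'def]; linarith
  have hc'c : c' < c := by rw [hc'def]; linarith
  have hc'0 : 0 < c' := lt_trans (by positivity) hc'lb
  set a : ℝ := c' * (1 + δ) - 1 with hadef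
  have ha0 : 0 < a := by
    rw [hadef]
    rw [div_lt_iff₀ h1δ] at hc'lb
    linarith
  have hev : ∀ᶠ n : ℕ in atTop, c' < avg n ω :=
    eventually_lt_of_lt_liminf (lt_of_lt_of_le hc'c hlim)
      (isBoundedUnder_of ⟨0, fun n => havg0 n ω⟩)
  obtain ⟨N₀, hN₀⟩ := eventually_atTop.mp hev
  refine ⟨(N₀ : ℝ) + 1 + (c' + 1) / a + 1 / δ, fun t ht => ?_⟩
  have hN₀0 : (0:ℝ) ≤ N₀ := Nat.cast_nonneg N₀
  have hca : 0 < (c' + 1) / a := by positivity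
  have hdinv : 0 < 1 / δ := by positivity
  have ht1 : (N₀ : ℝ) + 1 < t := by linarith
  have ht2 : (c' + 1) / a < t := by linarith
  have ht3 : 1 / δ < t := by linarith
  have ht0 : 0 < t := by linarith
  have hδt : 1 < δ * t := by rw [div_lt_iff₀ hδ0] at ht3; linarith
  set n : ℕ := ⌊(1 + δ) * t⌋₊ with hndef
  have h1t : (0:ℝ) ≤ (1 + δ) * t := by positivity
  have hnle : (n : ℝ) ≤ (1 + δ) * t := Nat.floor_le h1t
  have hngt : (1 + δ) * t - 1 < (n : ℝ) := by
    have := Nat.lt_floor_add_one ((1 + δ) * t)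
    push_cast at this ⊢
    linarith
  have htn : t < (n : ℝ) := by nlinarith
  have hN₀n : N₀ ≤ n := by
    have : (N₀ : ℝ) < (n : ℝ) := by nlinarith
    exact_mod_cast this.le
  have havgn := hN₀ n hN₀n
  have hnpos : (0:ℝ) < n := lt_trans ht0 htn
  have hhit : c' * n < (hitm τ A ω 0 (n : ℝ)).toReal := by
    rw [havgdef] at havgn
    simp only at havgn
    rw [lt_div_iff₀ hnpos] at havgn
    linarith
  by_contra hcon
  push_neg at hcon
  have hzero : hitm τ A ω t (n : ℝ) = 0 := by
    have hsub : {s : ℝ | τ s ω ∈ A} ∩ Set.Ioc t (n : ℝ) ⊆ {(1 + δ) * t} := by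
      rintro s ⟨hsA, hs1, hs2⟩
      simp only [Set.mem_singleton_iff]
      by_contra hne
      have hlt : s < (1 + δ) * t := lt_of_le_of_ne (le_trans hs2 hnle) hne
      exact hcon s ⟨hs1, hlt⟩ hsA
    refine le_antisymm (le_trans (measure_mono hsub) ?_) zero_le
    simp [Real.volume_singleton]
  have hsplit : hitm τ A ω 0 (n : ℝ) = hitm τ A ω 0 t + hitm τ A ω t (n : ℝ) :=
    hitm_add hmeas hA ω ht0.le htn.le
  have hle_t : (hitm τ A ω 0 (n : ℝ)).toReal ≤ t := by
    rw [hsplit, hzero, add_zero]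
    exact ENNReal.toReal_le_of_le_ofReal ht0.le (by simpa using hitm_le (τ := τ) (A := A) ω 0 t)
  have hta : c' + 1 < a * t := by rw [div_lt_iff₀ ha0] at ht2; linarith
  have : t < c' * n := by nlinarith
  linarith
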